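/- Every finite group G possessing a subnormal series 1 = G₀ < G₁ < … < G_t = G in which each index |G_i : G_{i-1}| is prime belongs to the class F: for every factorization |G| = a·b there exist subsets A, B of G with |A| = a, |B| = b, and G = AB. -/

import Mathlib

def IsFactorization {G : Type*} [Group G] (A B : Finset G) : Prop :=
  ∀ g : G, ∃! p : G × G, p.1 ∈ A ∧ p.2 ∈ B ∧ p.1 * p.2 = g

def InF (G : Type*) [Group G] : Prop :=
  ∀ a b : ℕ, a * b = Nat.card G →
    ∃ A B : Finset G, A.card = a ∧ B.card = b ∧ IsFactorization A B

open Subgroup in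
lemma step_left {G : Type*} [Group G] [Fintype G] {H : Subgroup G}
    {S : Set G} (hS : Subgroup.IsComplement S (H : Set G))
    {A' B' : Finset ↥H} (hF : IsFactorization A' B') :
    ∃ A B : Finset G, A.card = Nat.card S * A'.card ∧ B.card = B'.card ∧
      IsFactorization A B := by
  classical
  have hSfin : S.Finite := Set.toFinite S
  set Sf := hSfin.toFinset with hSf
  refine ⟨Finset.image (fun q : G × ↥H => q.1 * (q.2 : G)) (Sf ×ˢ A'),
          B'.map ⟨((↑) : ↥H → G), Subtype.coe_injective⟩, ?_, ?_, ?_⟩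
  · have hinj : Set.InjOn (fun q : G × ↥H => q.1 * (q.2 : G)) ↑(Sf ×ˢ A') := by
      rintro ⟨t1, a1⟩ hq1 ⟨t2, a2⟩ hq2 h
      simp only [Finset.coe_product, Set.mem_prod, Finset.mem_coe] at hq1 hq2
      have ht1 : t1 ∈ S := hSfin.mem_toFinset.mp hq1.1
      have ht2 : t2 ∈ S := hSfin.mem_toFinset.mp hq2.1
      have := hS.1 (a₁ := (⟨t1, ht1⟩, ⟨(a1 : G), a1.2⟩))
        (a₂ := (⟨t2, ht2⟩, ⟨(a2 : G), a2.2⟩)) h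
      obtain ⟨h1, h2⟩ := Prod.mk.injEq .. ▸ this
      exact Prod.ext (congrArg Subtype.val h1) (Subtype.ext (congrArg Subtype.val h2))
    rw [Finset.card_image_of_injOn hinj, Finset.card_product]
    congr 1
    rw [Set.Finite.card_toFinset]
    exact (Nat.card_eq_fintype_card).symm
  · exact Finset.card_map _
  · intro g
    obtain ⟨⟨⟨tv, htS⟩, ⟨hv, hvH⟩⟩, hprod, huniq⟩ := hS.existsUnique g
    obtain ⟨⟨a₀, b₀⟩, ⟨ha₀, hb₀, hab₀⟩, huniq'⟩ := hF ⟨hv, hvH⟩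
    refine ⟨(tv * (a₀ : G), (b₀ : G)), ⟨?_, ?_, ?_⟩, ?_⟩
    · exact Finset.mem_image.mpr ⟨(tv, a₀),
        Finset.mem_product.mpr ⟨hSfin.mem_toFinset.mpr htS, ha₀⟩, rfl⟩
    · exact Finset.mem_map.mpr ⟨b₀, hb₀, rfl⟩
    · have : ((a₀ * b₀ : ↥H) : G) = hv := congrArg Subtype.val hab₀
      push_cast at this
      simp only [mul_assoc, this, hprod]
    · rintro ⟨x, y⟩ ⟨hx, hy, hxy⟩
      obtain ⟨⟨t1, a1⟩, hq, rfl⟩ := Finset.mem_image.mp hx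
      obtain ⟨ht1, ha1⟩ := Finset.mem_product.mp hq
      obtain ⟨b1, hb1, rfl⟩ := Finset.mem_map.mp hy
      have ht1S : t1 ∈ S := hSfin.mem_toFinset.mp ht1
      have key : t1 * ((a1 * b1 : ↥H) : G) = g := by
        push_cast
        simpa [mul_assoc] using hxy
      have := huniq (⟨t1, ht1S⟩, ⟨((a1 * b1 : ↥H) : G), (a1 * b1).2⟩) key
      obtain ⟨h1, h2⟩ := Prod.mk.injEq .. ▸ this
      have ht : t1 = tv := congrArg Subtype.val h1
      have hab : a1 * b1 = (⟨hv, hvH⟩ : ↥H) := Subtype.ext (congrArg Subtype.val h2)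
      have := huniq' (a1, b1) ⟨ha1, hb1, hab⟩
      obtain ⟨ea, eb⟩ := Prod.mk.injEq .. ▸ this
      simp [ht, ea, eb]

open Subgroup in
lemma step_right {G : Type*} [Group G] [Fintype G] {H : Subgroup G}
    {S : Set G} (hS : Subgroup.IsComplement (H : Set G) S)
    {A' B' : Finset ↥H} (hF : IsFactorization A' B') :
    ∃ A B : Finset G, A.card = A'.card ∧ B.card = B'.card * Nat.card S ∧
      IsFactorization A B := by
  classical
  have hSfin : S.Finite := Set.toFinite S
  set Sf := hSfin.toFinset with hSf
  refine ⟨A'.map ⟨((↑) : ↥H → G), Subtype.coe_injective⟩,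
          Finset.image (fun q : ↥H × G => (q.1 : G) * q.2) (B' ×ˢ Sf), ?_, ?_, ?_⟩
  · exact Finset.card_map _
  · have hinj : Set.InjOn (fun q : ↥H × G => (q.1 : G) * q.2) ↑(B' ×ˢ Sf) := by
      rintro ⟨b1, t1⟩ hq1 ⟨b2, t2⟩ hq2 h
      simp only [Finset.coe_product, Set.mem_prod, Finset.mem_coe] at hq1 hq2
      have ht1 : t1 ∈ S := hSfin.mem_toFinset.mp hq1.2
      have ht2 : t2 ∈ S := hSfin.mem_toFinset.mp hq2.2
      have := hS.1 (a₁ := (⟨(b1 : G), b1.2⟩, ⟨t1, ht1⟩))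
        (a₂ := (⟨(b2 : G), b2.2⟩, ⟨t2, ht2⟩)) h
      obtain ⟨h1, h2⟩ := Prod.mk.injEq .. ▸ this
      exact Prod.ext (Subtype.ext (congrArg Subtype.val h1)) (congrArg Subtype.val h2)
    rw [Finset.card_image_of_injOn hinj, Finset.card_product]
    congr 1
    rw [Set.Finite.card_toFinset]
    exact (Nat.card_eq_fintype_card).symm
  · intro g
    obtain ⟨⟨⟨hv, hvH⟩, ⟨tv, htS⟩⟩, hprod, huniq⟩ := hS.existsUnique g
    obtain ⟨⟨a₀, b₀⟩, ⟨ha₀, hb₀, hab₀⟩, huniq'⟩ := hF ⟨hv, hvH⟩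
    refine ⟨((a₀ : G), (b₀ : G) * tv), ⟨?_, ?_, ?_⟩, ?_⟩
    · exact Finset.mem_map.mpr ⟨a₀, ha₀, rfl⟩
    · exact Finset.mem_image.mpr ⟨(b₀, tv),
        Finset.mem_product.mpr ⟨hb₀, hSfin.mem_toFinset.mpr htS⟩, rfl⟩
    · have : ((a₀ * b₀ : ↥H) : G) = hv := congrArg Subtype.val hab₀
      push_cast at this
      simp only [← mul_assoc, this, hprod]
    · rintro ⟨x, y⟩ ⟨hx, hy, hxy⟩
      obtain ⟨a1, ha1, rfl⟩ := Finset.mem_map.mp hx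
      obtain ⟨⟨b1, t1⟩, hq, rfl⟩ := Finset.mem_image.mp hy
      obtain ⟨hb1, ht1⟩ := Finset.mem_product.mp hq
      have ht1S : t1 ∈ S := hSfin.mem_toFinset.mp ht1
      have key : ((a1 * b1 : ↥H) : G) * t1 = g := by
        push_cast
        simpa [mul_assoc] using hxy
      have := huniq (⟨((a1 * b1 : ↥H) : G), (a1 * b1).2⟩, ⟨t1, ht1S⟩) key
      obtain ⟨h1, h2⟩ := Prod.mk.injEq .. ▸ this
      have ht : t1 = tv := congrArg Subtype.val h2
      have hab : a1 * b1 = (⟨hv, hvH⟩ : ↥H) := Subtype.ext (congrArg Subtype.val h1)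
      have := huniq' (a1, b1) ⟨ha1, hb1, hab⟩
      obtain ⟨ea, eb⟩ := Prod.mk.injEq .. ▸ this
      simp [ht, ea, eb]

open Subgroup in
theorem aux_inF : ∀ (t : ℕ) (G : Type*) [Group G] [Fintype G]
    (s : Fin (t + 1) → Subgroup G), s 0 = ⊥ → s (Fin.last t) = ⊤ →
    (∀ i : Fin t, s i.castSucc ≤ s i.succ) →
    (∀ i : Fin t, ((s i.castSucc).relIndex (s i.succ)).Prime) → InF G := by
  intro t
  induction t with
  | zero =>
    intro G _ _ s h0 htop _ _
    have hbt : (⊥ : Subgroup G) = ⊤ := h0 ▸ htop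
    have hsub : Subsingleton G := by
      constructor
      intro x y
      have hx : x ∈ (⊥ : Subgroup G) := hbt ▸ Subgroup.mem_top x
      have hy : y ∈ (⊥ : Subgroup G) := hbt ▸ Subgroup.mem_top y
      rw [Subgroup.mem_bot] at hx hy
      rw [hx, hy]
    intro a b hab
    have hcard : Nat.card G = 1 := Nat.card_eq_one_iff_unique.mpr ⟨hsub, ⟨1⟩⟩
    rw [hcard] at hab
    have ha : a = 1 := Nat.eq_one_of_mul_eq_one_right hab
    have hb : b = 1 := Nat.eq_one_of_mul_eq_one_left hab
    refine ⟨{1}, {1}, by simp [ha], by simp [hb], ?_⟩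
    intro g
    refine ⟨(1, 1), ⟨by simp, by simp, Subsingleton.elim _ _⟩, ?_⟩
    rintro ⟨x, y⟩ ⟨hx, hy, -⟩
    simp only [Finset.mem_singleton] at hx hy
    simp [hx, hy]
  | succ t ih =>
    intro G _ _ s h0 htop hle hprime
    set H : Subgroup G := s (Fin.last t).castSucc with hH
    have hmono : Monotone s := Fin.monotone_iff_le_succ.mpr hle
    -- the new chain inside H
    haveI : Fintype ↥H := Fintype.ofFinite ↥H
    set s' : Fin (t + 1) → Subgroup ↥H := fun i => (s i.castSucc).subgroupOf H with hs'
    have h0' : s' 0 = ⊥ := by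
      simp only [hs', Fin.castSucc_zero, h0, Subgroup.bot_subgroupOf]
    have htop' : s' (Fin.last t) = ⊤ := by
      simp only [hs', ← hH, Subgroup.subgroupOf_self]
    have hle' : ∀ i : Fin t, s' i.castSucc ≤ s' i.succ := by
      intro i
      simp only [hs']
      apply Subgroup.comap_mono
      rw [← Fin.succ_castSucc]
      exact hle i.castSucc
    have hsub : ∀ i : Fin (t + 1), s i.castSucc ≤ H := fun i =>
      hmono (Fin.castSucc_le_castSucc_iff.mpr (Fin.le_last i))
    have hprime' : ∀ i : Fin t, ((s' i.castSucc).relIndex (s' i.succ)).Prime := by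
      intro i
      simp only [hs']
      rw [Subgroup.relIndex_subgroupOf (hsub i.succ)]
      have := hprime i.castSucc
      rwa [Fin.succ_castSucc] at this
    have hInFH : InF ↥H := ih ↥H s' h0' htop' hle' hprime'
    -- the top prime
    have hptop : H.index.Prime := by
      have := hprime (Fin.last t)
      rwa [Fin.succ_last, htop, Subgroup.relIndex_top_right] at this
    intro a b hab
    have hGcard : H.index * Nat.card ↥H = Nat.card G := Subgroup.index_mul_card H
    have hdvd : H.index ∣ a * b := by
      rw [hab, ← hGcard]; exact Dvd.intro _ rfl
    rcases (Nat.Prime.dvd_mul hptop).mp hdvd with hpa | hpb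
    · obtain ⟨a', rfl⟩ := hpa
      have hab' : a' * b = Nat.card ↥H := by
        have : H.index * (a' * b) = H.index * Nat.card ↥H := by
          rw [hGcard, ← hab]; ring
        exact Nat.eq_of_mul_eq_mul_left hptop.pos this
      obtain ⟨A', B', hA', hB', hF⟩ := hInFH a' b hab'
      obtain ⟨S, hS, -⟩ := H.exists_isComplement_left 1
      obtain ⟨A, B, hA, hB, hfac⟩ := step_left hS hF
      refine ⟨A, B, ?_, ?_, hfac⟩
      · rw [hA, Subgroup.IsComplement.card_left hS, hA']
      · rw [hB, hB']
    · obtain ⟨b', rfl⟩ := hpb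
      have hab' : a * b' = Nat.card ↥H := by
        have : H.index * (a * b') = H.index * Nat.card ↥H := by
          rw [hGcard, ← hab]; ring
        exact Nat.eq_of_mul_eq_mul_left hptop.pos this
      obtain ⟨A', B', hA', hB', hF⟩ := hInFH a b' hab'
      obtain ⟨S, hS, -⟩ := H.exists_isComplement_right 1
      obtain ⟨A, B, hA, hB, hfac⟩ := step_right hS hF
      refine ⟨A, B, ?_, ?_, hfac⟩
      · rw [hA, hA']
      · rw [hB, Subgroup.IsComplement.card_right hS, hB', Nat.mul_comm]

theorem inF_of_prime_index_series {G : Type*} [Group G] [Fintype G] (t : ℕ)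
    (s : Fin (t + 1) → Subgroup G) (h0 : s 0 = ⊥) (ht : s (Fin.last t) = ⊤)
    (hle : ∀ i : Fin t, s i.castSucc ≤ s i.succ)
    (hprime : ∀ i : Fin t, ((s i.castSucc).relIndex (s i.succ)).Prime) :
    InF G := by
  exact aux_inF t G s h0 ht hle hprime
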